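/- Let L be an algebraically closed field of characteristic p > 0, let M be a finite-dimensional L-vector space, and let φ: M → M be an additive map that is semi-linear with respect to the Frobenius of L (i.e. φ(a·m) = a^p·φ(m) for a ∈ L, m ∈ M). Then the map φ - 1 : M → M is surjective. -/

import Mathlib

open Polynomial Finset

lemma aux_key {L : Type*} [Field L] [IsAlgClosed L] (p : ℕ) [Fact p.Prime] [CharP L p]
    {M : Type*} [AddCommGroup M] [Module L M]
    (φ : M → M) (hadd : ∀ x y : M, φ (x + y) = φ x + φ y)
    (hsem : ∀ (a : L) (m : M), φ (a • m) = (a ^ p) • φ m)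
    (y : M) (m : ℕ) (b : ℕ → L)
    (hrel : φ^[m+1] y = ∑ i ∈ Finset.range (m+1), b i • φ^[i] y) :
    ∃ x, φ x - x = y := by
  have hp : p.Prime := Fact.out
  -- polynomials
  set D : ℕ → Polynomial L :=
    fun i => Nat.rec (Polynomial.C (b 0) * X - 1)
      (fun i Di => Di ^ p + Polynomial.C (b (i+1)) * X) i with hD
  set Cp : ℕ → Polynomial L := fun i => Polynomial.expand L p (D i) with hCp
  have hC0 : Cp 0 = Polynomial.C (b 0) * X ^ p - 1 := by
    simp [hCp, hD, Polynomial.expand_X]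
  have hCs : ∀ i, Cp (i+1) = Cp i ^ p + Polynomial.C (b (i+1)) * X ^ p := by
    intro i
    simp [hCp, hD, Polynomial.expand_X]
  have hcoeff : ∀ i, (Cp i).coeff 1 = 0 := by
    intro i
    rw [hCp, Polynomial.coeff_expand hp.pos]
    simp [Nat.dvd_one, hp.ne_one]
  set P : Polynomial L := Cp m - X with hPdef
  have hP1 : P.coeff 1 = -1 := by
    simp [hPdef, hcoeff]
  have hPnd : 1 ≤ P.natDegree := Polynomial.le_natDegree_of_ne_zero (by simp [hP1])
  have hPdeg : P.degree ≠ 0 := by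
    intro h
    have := Polynomial.natDegree_eq_zero_iff_degree_le_zero.mpr h.le
    omega
  obtain ⟨t, ht⟩ := IsAlgClosed.exists_root P hPdeg
  have htt : (Cp m).eval t = t := by
    have : (Cp m).eval t - t = 0 := by simpa [hPdef] using ht
    exact sub_eq_zero.mp this
  set c : ℕ → L := fun i => (Cp i).eval t with hc
  have hc0 : c 0 = b 0 * t ^ p - 1 := by simp [hc, hC0]
  have hcs : ∀ i, c (i+1) = (c i) ^ p + b (i+1) * t ^ p := by
    intro i; simp [hc, hCs i]
  have hclast : c m = t := htt
  -- phi as additive hom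
  set ψ : M →+ M := AddMonoidHom.mk' φ hadd with hψ
  have hψa : ∀ z, ψ z = φ z := fun z => rfl
  refine ⟨∑ i ∈ Finset.range (m+1), c i • φ^[i] y, ?_⟩
  have hφsum : φ (∑ i ∈ Finset.range (m+1), c i • φ^[i] y)
      = ∑ i ∈ Finset.range (m+1), (c i) ^ p • φ^[i+1] y := by
    rw [← hψa, map_sum]
    refine Finset.sum_congr rfl fun i _ => ?_
    rw [hψa, hsem, Function.iterate_succ_apply']
  rw [hφsum]
  -- split off last term and use the relation
  rw [Finset.sum_range_succ, hclast, hrel]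
  -- rewrite first sum via shifted indexing
  have hshift : ∑ i ∈ Finset.range m, (c i) ^ p • φ^[i+1] y
      = ∑ i ∈ Finset.range (m+1), (if i = 0 then (0:L) else (c (i-1)) ^ p) • φ^[i] y := by
    rw [Finset.sum_range_succ']
    simp
  rw [hshift, Finset.smul_sum]
  -- combine everything into a single sum
  rw [← Finset.sum_add_distrib, ← Finset.sum_sub_distrib]
  have hfinal : ∀ i ∈ Finset.range (m+1),
      ((if i = 0 then (0:L) else (c (i-1)) ^ p) • φ^[i] y + t ^ p • b i • φ^[i] y
        - c i • φ^[i] y) = (if i = 0 then y else 0) := by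
    intro i _
    rcases Nat.eq_zero_or_pos i with h0 | h0
    · subst h0
      simp [hc0, smul_smul]
      module
    · obtain ⟨j, rfl⟩ : ∃ j, i = j + 1 := ⟨i - 1, (Nat.succ_pred_eq_of_pos h0).symm⟩
      simp [hcs j, smul_smul]
      module
  rw [Finset.sum_congr rfl hfinal]
  simp


/-- **Surjectivity of φ - 1 for a Frobenius-semilinear endomorphism.**
Let `L` be an algebraically closed field of characteristic `p > 0`, `M` a
finite-dimensional `L`-vector space and `φ : M → M` an additive map which is
semi-linear with respect to the Frobenius of `L` (i.e. `φ (a • m) = a ^ p • φ m`).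
Then `φ - 1 : M → M` is surjective. -/
theorem stmt_0 {L : Type*} [Field L] [IsAlgClosed L] (p : ℕ) [Fact p.Prime] [CharP L p]
    {M : Type*} [AddCommGroup M] [Module L M] [FiniteDimensional L M]
    (φ : M → M) (hadd : ∀ x y : M, φ (x + y) = φ x + φ y)
    (hsem : ∀ (a : L) (m : M), φ (a • m) = (a ^ p) • φ m) :
    Function.Surjective (fun m : M => φ m - m) := by
  intro y
  simp only
  set d := Module.finrank L M with hd
  have hdep : ¬ LinearIndependent L (fun i : Fin (d+1) => φ^[(i:ℕ)] y) := by
    intro h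
    have := h.fintype_card_le_finrank
    simp [hd] at this
  obtain ⟨g, hgsum, j, hj⟩ := Fintype.not_linearIndependent_iff.mp hdep
  classical
  set S : Finset (Fin (d+1)) := Finset.univ.filter (fun i => g i ≠ 0) with hS
  have hjS : j ∈ S := by simp [hS, hj]
  set N : Fin (d+1) := S.max' ⟨j, hjS⟩ with hN
  have hNS : N ∈ S := S.max'_mem ⟨j, hjS⟩
  have hNg : g N ≠ 0 := by simpa [hS] using hNS
  have hgt : ∀ i : Fin (d+1), N < i → g i = 0 := by
    intro i hi
    by_contra hgi
    exact absurd (S.le_max' i (by simp [hS, hgi])) (not_le.mpr hi)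
  -- ℕ-indexed coefficient function
  set g' : ℕ → L := fun i => if h : i < d+1 then g ⟨i, h⟩ else 0 with hg'
  have hsum' : ∑ i ∈ Finset.range (d+1), g' i • φ^[i] y = 0 := by
    rw [← Fin.sum_univ_eq_sum_range (fun i => g' i • φ^[i] y) (d+1)]
    rw [← hgsum]
    refine Finset.sum_congr rfl fun i _ => ?_
    simp [hg', i.isLt, not_lt.mpr (Fin.is_le i)]
  set n : ℕ := (N : ℕ) with hn
  have hgt' : ∀ i, n < i → g' i = 0 := by
    intro i hi
    by_cases h : i < d + 1
    · simp only [hg', dif_pos h]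
      exact hgt ⟨i, h⟩ (by simpa [Fin.lt_def] using hi)
    · simp [hg', h, show ¬ i ≤ d by omega]
  have hsum2 : ∑ i ∈ Finset.range (n+1), g' i • φ^[i] y = 0 := by
    rw [← hsum']
    have hle : n + 1 ≤ d + 1 := N.isLt
    rw [← Finset.sum_range_add_sum_Ico _ hle]
    have : ∑ i ∈ Finset.Ico (n+1) (d+1), g' i • φ^[i] y = 0 := by
      refine Finset.sum_eq_zero fun i hi => ?_
      rw [hgt' i (by simpa using (Finset.mem_Ico.mp hi).1), zero_smul]
    rw [this, add_zero]
  have hg'N : g' n = g N := by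
    simp [hg', N.isLt, show n ≤ d from Fin.is_le N]; rfl
  have hrel : φ^[n] y = ∑ i ∈ Finset.range n, (-(g' i) / g N) • φ^[i] y := by
    rw [Finset.sum_range_succ] at hsum2
    have h1 : g' n • φ^[n] y = ∑ i ∈ Finset.range n, (-(g' i)) • φ^[i] y := by
      rw [eq_comm]
      simp only [neg_smul, Finset.sum_neg_distrib, neg_eq_iff_add_eq_zero]
      linear_combination (norm := module) hsum2
    calc φ^[n] y = (g' n)⁻¹ • (g' n • φ^[n] y) := by
          rw [smul_smul, inv_mul_cancel₀ (hg'N ▸ hNg), one_smul]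
      _ = ∑ i ∈ Finset.range n, (-(g' i) / g N) • φ^[i] y := by
          rw [h1, Finset.smul_sum]
          refine Finset.sum_congr rfl fun i _ => ?_
          rw [smul_smul, div_eq_inv_mul, ← hg'N]
  rcases Nat.eq_zero_or_pos n with h0 | h0
  · rw [h0] at hrel
    simp at hrel
    refine ⟨0, ?_⟩
    have hφ0 : φ 0 = 0 := by
      have h := hadd 0 0
      rw [add_zero] at h
      exact left_eq_add.mp h
    rw [hφ0, sub_zero, hrel]
  · obtain ⟨m, hm⟩ : ∃ m, n = m + 1 := ⟨n - 1, (Nat.succ_pred_eq_of_pos h0).symm⟩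
    rw [hm] at hrel
    obtain ⟨x, hx⟩ := aux_key p φ hadd hsem y m (fun i => -(g' i) / g N) hrel
    exact ⟨x, hx⟩
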